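/- Let p be a prime and A, B nonempty subsets of Z/pZ. Then |A ∔ B| ≥ min{p, |A|+|B|-3}, where A ∔ B = {a+b : a ∈ A, b ∈ B, a ≠ b}. -/

import Mathlib

open Finset

/-- The restricted sumset `{a + b : a ∈ A, b ∈ B, a ≠ b}`. -/
def restrictedSumset {α : Type*} [AddCommMonoid α] [DecidableEq α]
    (A B : Finset α) : Finset α :=
  ((A ×ˢ B).filter fun x => x.1 ≠ x.2).image fun x => x.1 + x.2

open Polynomial

/-- `f` has total degree (in the `(R[x])[y]` sense) at most `D`. -/
def TDB {R : Type*} [CommSemiring R] (f : Polynomial (Polynomial R)) (D : ℕ) : Prop :=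
  ∀ j t : ℕ, D < j + t → (f.coeff j).coeff t = 0

lemma TDB.mul {R : Type*} [CommSemiring R] {f g : Polynomial (Polynomial R)} {D E : ℕ}
    (hf : TDB f D) (hg : TDB g E) : TDB (f * g) (D + E) := by
  intro j t hjt
  rw [Polynomial.coeff_mul, Polynomial.finset_sum_coeff]
  refine Finset.sum_eq_zero fun x hx => ?_
  rw [Finset.HasAntidiagonal.mem_antidiagonal] at hx
  rw [Polynomial.coeff_mul]
  refine Finset.sum_eq_zero fun y hy => ?_
  rw [Finset.HasAntidiagonal.mem_antidiagonal] at hy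
  by_cases h1 : D < x.1 + y.1
  · rw [hf _ _ h1, zero_mul]
  · rw [hg x.2 y.2 (by omega), mul_zero]

lemma coeff_X_mul' {R : Type*} [Semiring R] (P : Polynomial R) (j : ℕ) :
    (Polynomial.X * P).coeff j = if j = 0 then 0 else P.coeff (j - 1) := by
  cases j with
  | zero => rw [Polynomial.mul_coeff_zero, Polynomial.coeff_X, if_neg (by omega), zero_mul,
      if_pos rfl]
  | succ n => rw [Polynomial.coeff_X_mul, if_neg (by omega), Nat.add_sub_cancel]

/-- coefficient of `y^j` in `(C u + X) * P`. -/
lemma coeff_C_add_X_mul {R : Type*} [CommSemiring R] (u : Polynomial R)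
    (P : Polynomial (Polynomial R)) (j : ℕ) :
    ((Polynomial.C u + Polynomial.X) * P).coeff j
      = u * P.coeff j + (if j = 0 then 0 else P.coeff (j - 1)) := by
  rw [add_mul, Polynomial.coeff_add, Polynomial.coeff_C_mul, coeff_X_mul']

/-- coefficient of `y^j` in `(C u - X) * P`. -/
lemma coeff_C_sub_X_mul {R : Type*} [CommRing R] (u : Polynomial R)
    (P : Polynomial (Polynomial R)) (j : ℕ) :
    ((Polynomial.C u - Polynomial.X) * P).coeff j
      = u * P.coeff j - (if j = 0 then 0 else P.coeff (j - 1)) := by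
  rw [sub_mul, Polynomial.coeff_sub, Polynomial.coeff_C_mul, coeff_X_mul']

lemma coeff_X_sub_C_mul {R : Type*} [CommRing R] (c : R) (q : Polynomial R) (i : ℕ) :
    ((Polynomial.X - Polynomial.C c) * q).coeff i
      = (if i = 0 then 0 else q.coeff (i - 1)) - c * q.coeff i := by
  rw [sub_mul, Polynomial.coeff_sub, Polynomial.coeff_C_mul, coeff_X_mul']

variable {F : Type*} [Field F]

/-- The linear factor `x + y - c` as an element of `(F[x])[y]`. -/
noncomputable def lin (c : F) : Polynomial (Polynomial F) :=
  Polynomial.C (Polynomial.X - Polynomial.C c) + Polynomial.X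

lemma TDB_lin (c : F) : TDB (lin c) 1 := by
  intro j t hjt
  rw [lin, Polynomial.coeff_add, Polynomial.coeff_C, Polynomial.coeff_X]
  match j, hjt with
  | 0, h =>
    rw [if_pos rfl, if_neg (by omega), add_zero, Polynomial.coeff_sub, Polynomial.coeff_X,
      Polynomial.coeff_C, if_neg (by omega), if_neg (by omega), sub_zero]
  | 1, h => rw [if_neg (by omega), if_pos rfl, zero_add, Polynomial.coeff_one, if_neg (by omega)]
  | (n+2), h => rw [if_neg (by omega), if_neg (by omega), add_zero, Polynomial.coeff_zero]

/-- total degree bound and top (homogeneous-part) coefficients of `∏ c ∈ s, (x + y - c)`. -/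
lemma prod_lin_props (s : Finset F) :
    TDB (∏ c ∈ s, lin c) s.card ∧
    ∀ i j : ℕ, i + j = s.card → ((∏ c ∈ s, lin c).coeff j).coeff i = (s.card.choose j : F) := by
  classical
  induction s using Finset.cons_induction with
  | empty =>
    constructor
    · intro j t hjt
      simp only [Finset.prod_empty, Finset.card_empty] at hjt ⊢
      rcases Nat.eq_zero_or_pos j with rfl | hj
      · have ht : t ≠ 0 := by omega
        simp [Polynomial.coeff_one, ht]
      · have hj' : j ≠ 0 := by omega
        simp [Polynomial.coeff_one, hj']
    · intro i j hij
      simp only [Finset.card_empty] at hij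
      obtain ⟨rfl, rfl⟩ : i = 0 ∧ j = 0 := by omega
      simp
  | cons c s hc ih =>
    obtain ⟨ihT, ihC⟩ := ih
    set P := ∏ c ∈ s, lin c with hP
    set N := s.card with hN
    rw [Finset.prod_cons, Finset.card_cons]
    have hT : TDB (lin c * P) (1 + N) := (TDB_lin c).mul ihT
    refine ⟨fun j t h => hT j t (by omega), ?_⟩
    intro i j hij
    rw [lin, coeff_C_add_X_mul]
    rw [Polynomial.coeff_add, _root_.coeff_X_sub_C_mul, ← hP]
    rw [ihT j i (by omega), mul_zero, sub_zero]
    match j, hij with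
    | 0, hij =>
      rw [if_neg (show ¬ i = 0 by omega), if_pos rfl, Polynomial.coeff_zero, add_zero,
        ihC (i-1) 0 (by omega)]
      simp
    | (k+1), hij =>
      rw [if_neg (show ¬ (k+1) = 0 by omega), Nat.add_sub_cancel]
      rcases Nat.eq_zero_or_pos i with rfl | hi
      · rw [if_pos rfl, zero_add, ihC 0 k (by omega)]
        have h1 : k = N := by omega
        subst h1
        simp [hN]
      · rw [if_neg (show ¬ i = 0 by omega), ihC (i-1) (k+1) (by omega), ihC i k (by omega),
          Nat.choose_succ_succ' N k]
        push_cast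
        ring

lemma cn_step {F : Type*} [Field F] {g : F[X]} (hg : g.Monic)
    (R : Polynomial (Polynomial F)) (t : ℕ)
    (hR : ∀ j, g.natDegree ≤ j → (R.coeff j).coeff t = 0) :
    ∀ j', ((R %ₘ g.map Polynomial.C).coeff j').coeff t = (R.coeff j').coeff t := by
  set m := g.natDegree with hm
  set GB : Polynomial (Polynomial F) := g.map Polynomial.C with hGBdef
  have hGB : GB.Monic := hg.map _
  have hGBdeg : GB.natDegree = m := hg.natDegree_map _
  set Q := R /ₘ GB with hQdef
  have hkey : R %ₘ GB = R - GB * Q :=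
    eq_sub_of_add_eq (Polynomial.modByMonic_add_div R GB)
  have hrc : ∀ j, m ≤ j → (R %ₘ GB).coeff j = 0 := by
    intro j hj
    apply Polynomial.coeff_eq_zero_of_degree_lt
    calc (R %ₘ GB).degree < GB.degree := Polynomial.degree_modByMonic_lt R hGB
    _ ≤ j := by
        rw [Polynomial.degree_eq_natDegree hGB.ne_zero, hGBdeg]
        exact_mod_cast hj
  have hgc : ∀ k, m < k → g.coeff k = 0 :=
    fun k hk => Polynomial.coeff_eq_zero_of_natDegree_lt hk
  -- the product coefficient expansion
  have hmulc : ∀ j, ((GB * Q).coeff j).coeff t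
      = ∑ x ∈ Finset.HasAntidiagonal.antidiagonal j, g.coeff x.1 * (Q.coeff x.2).coeff t := by
    intro j
    rw [Polynomial.coeff_mul, Polynomial.finset_sum_coeff]
    refine Finset.sum_congr rfl fun x _ => ?_
    rw [hGBdef, Polynomial.coeff_map, Polynomial.coeff_C_mul]
  have hQc : ∀ j', (Q.coeff j').coeff t = 0 := by
    have aux : ∀ k j', Q.natDegree < j' + k → (Q.coeff j').coeff t = 0 := by
      intro k
      induction k with
      | zero =>
        intro j' hj'
        have h0 : Q.coeff j' = 0 := Polynomial.coeff_eq_zero_of_natDegree_lt (by omega)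
        rw [h0]; simp
      | succ k ih =>
        intro j' hj'
        have h1 : ((GB * Q).coeff (j' + m)).coeff t = 0 := by
          have : (GB * Q).coeff (j' + m) = R.coeff (j' + m) - (R %ₘ GB).coeff (j' + m) := by
            rw [hkey, Polynomial.coeff_sub]; ring
          rw [this, Polynomial.coeff_sub, hR _ (by omega), hrc _ (by omega)]
          simp
        rw [hmulc] at h1
        rw [Finset.sum_eq_single (m, j')] at h1
        · have hgm : g.coeff m = 1 := hg.coeff_natDegree
          rw [hgm, one_mul] at h1
          exact h1
        · rintro ⟨k', l⟩ hmem hne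
          rw [Finset.HasAntidiagonal.mem_antidiagonal] at hmem
          rcases lt_trichotomy k' m with hlt | heq | hgt
          · have : j' < l := by omega
            rw [ih l (by omega), mul_zero]
          · exfalso; apply hne; simp at hmem ⊢; omega
          · rw [hgc _ hgt, zero_mul]
        · intro hnot
          exact absurd (Finset.HasAntidiagonal.mem_antidiagonal.mpr (by simp [Nat.add_comm])) hnot
    exact fun j' => aux (Q.natDegree + 1) j' (by omega)
  intro j'
  rw [hkey, Polynomial.coeff_sub, Polynomial.coeff_sub, hmulc]
  rw [Finset.sum_eq_zero fun x _ => by rw [hQc, mul_zero]]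
  ring

lemma prod_X_sub_C_dvd_of_eval_zero {F : Type*} [Field F] [DecidableEq F] (s : Finset F) (P : F[X])
    (h : ∀ b ∈ s, P.eval b = 0) : (∏ b ∈ s, (X - C b)) ∣ P := by
  rcases eq_or_ne P 0 with rfl | hP
  · exact dvd_zero _
  · rw [Finset.prod_eq_multiset_prod]
    rw [Multiset.prod_X_sub_C_dvd_iff_le_roots hP]
    rw [Multiset.le_iff_count]
    intro b
    by_cases hb : b ∈ s
    · have h1 : Multiset.count b s.1 ≤ 1 := (Multiset.nodup_iff_count_le_one.mp s.nodup) b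
      have h2 : 1 ≤ Multiset.count b P.roots := by
        rw [Multiset.one_le_count_iff_mem, Polynomial.mem_roots hP]
        exact h b hb
      omega
    · rw [Multiset.count_eq_zero_of_notMem hb]
      exact Nat.zero_le _

section keysec
variable {p : ℕ} [Fact p.Prime]

lemma key_lemma (A B : Finset (ZMod p)) (hB2 : 2 ≤ B.card) (hBA : B.card ≤ A.card)
    (hpcard : A.card + B.card - 3 ≤ p) :
    A.card + B.card - 3 ≤ (restrictedSumset A B).card := by
  have hp : p.Prime := Fact.out
  by_contra hcon
  push_neg at hcon
  obtain ⟨a, ha⟩ : ∃ a, A.card = a + 2 := ⟨A.card - 2, by omega⟩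
  obtain ⟨b, hb⟩ : ∃ b, B.card = b + 2 := ⟨B.card - 2, by omega⟩
  have hba : b ≤ a := by omega
  have habp : a + b + 1 ≤ p := by omega
  -- extend the restricted sumset to a set C' of size exactly a + b
  have hcard : (restrictedSumset A B).card ≤ a + b := by omega
  obtain ⟨C', hCsub, hCcard⟩ := Finset.exists_superset_card_eq hcard
    (by rw [ZMod.card p]; omega)
  -- the polynomials
  set g : Polynomial (Polynomial (ZMod p)) := ∏ c ∈ C', lin c with hgdef
  set f : Polynomial (Polynomial (ZMod p)) :=
    (Polynomial.C Polynomial.X - Polynomial.X) * g with hfdef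
  set gA : Polynomial (ZMod p) := ∏ α ∈ A, (Polynomial.X - Polynomial.C α) with hgAdef
  set gB : Polynomial (ZMod p) := ∏ β ∈ B, (Polynomial.X - Polynomial.C β) with hgBdef
  have hgA : gA.Monic := monic_prod_of_monic _ _ fun _ _ => monic_X_sub_C _
  have hgB : gB.Monic := monic_prod_of_monic _ _ fun _ _ => monic_X_sub_C _
  have hgAdeg : gA.natDegree = a + 2 := by
    rw [hgAdef, Polynomial.natDegree_prod_of_monic _ _ fun _ _ => monic_X_sub_C _]
    simp [ha]
  have hgBdeg : gB.natDegree = b + 2 := by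
    rw [hgBdef, Polynomial.natDegree_prod_of_monic _ _ fun _ _ => monic_X_sub_C _]
    simp [hb]
  -- total degree bound on f
  have hgT : TDB g (a + b) := hCcard ▸ (prod_lin_props C').1
  have hgC : ∀ i j : ℕ, i + j = a + b → (g.coeff j).coeff i = ((a+b).choose j : ZMod p) :=
    fun i j h => by
      have := (prod_lin_props C').2 i j (by rw [hCcard]; exact h)
      rwa [hCcard] at this
  have hfT : TDB f (1 + (a + b)) := by
    refine TDB.mul ?_ hgT
    intro j t hjt
    match j, hjt with
    | 0, h =>
      rw [Polynomial.coeff_sub, Polynomial.coeff_C, if_pos rfl, Polynomial.coeff_X,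
        if_neg (by omega), sub_zero, Polynomial.coeff_X, if_neg (by omega)]
    | 1, h =>
      rw [Polynomial.coeff_sub, Polynomial.coeff_C, if_neg (by omega), Polynomial.coeff_X,
        if_pos rfl, zero_sub, Polynomial.coeff_neg, Polynomial.coeff_one, if_neg (by omega),
        neg_zero]
    | (n+2), h =>
      rw [Polynomial.coeff_sub, Polynomial.coeff_C, if_neg (by omega), Polynomial.coeff_X,
        if_neg (by omega), sub_zero, Polynomial.coeff_zero]
  -- the top coefficient of f
  have htop : (f.coeff b).coeff (a+1)
      = ((a+b).choose b : ZMod p) - (if b = 0 then 0 else ((a+b).choose (b-1) : ZMod p)) := by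
    rw [hfdef, coeff_C_sub_X_mul, Polynomial.coeff_sub, coeff_X_mul',
      if_neg (show ¬ a + 1 = 0 by omega), Nat.add_sub_cancel, hgC a b rfl]
    congr 1
    rcases Nat.eq_zero_or_pos b with rfl | hbpos
    · rw [if_pos rfl, if_pos rfl, Polynomial.coeff_zero]
    · rw [if_neg (by omega), if_neg (by omega), hgC (a+1) (b-1) (by omega)]
  -- the top coefficient is nonzero
  have hKne : (f.coeff b).coeff (a+1) ≠ 0 := by
    rw [htop]
    have hcast : ∀ k : ℕ, k ≤ a + b → ((a+b).choose k : ZMod p) ≠ 0 := by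
      intro k hk h0
      rw [ZMod.natCast_eq_zero_iff] at h0
      have h1 : p ∣ (a+b).factorial := by
        rw [← Nat.choose_mul_factorial_mul_factorial hk]
        exact Dvd.dvd.mul_right (Dvd.dvd.mul_right h0 _) _
      rw [Nat.Prime.dvd_factorial hp] at h1
      omega
    rcases Nat.eq_zero_or_pos b with rfl | hbpos
    · rw [if_pos rfl, sub_zero]
      exact hcast 0 (by omega)
    · rw [if_neg (by omega)]
      intro h0
      have heq : ((a+b).choose b : ZMod p) = ((a+b).choose (b-1) : ZMod p) := by
        linear_combination h0
      have hid : (a+b).choose b * b = (a+b).choose (b-1) * (a + 1) := by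
        have := Nat.choose_succ_right_eq (a+b) (b-1)
        rw [show b - 1 + 1 = b by omega] at this
        rw [this]
        congr 1
        omega
      have hidF : ((a+b).choose b : ZMod p) * (b : ZMod p)
          = ((a+b).choose b : ZMod p) * ((a+1 : ℕ) : ZMod p) := by
        calc ((a+b).choose b : ZMod p) * (b : ZMod p)
            = (((a+b).choose (b-1) : ℕ) : ZMod p) * ((a+1 : ℕ) : ZMod p) := by
              exact_mod_cast congrArg (Nat.cast : ℕ → ZMod p) hid
          _ = _ := by rw [← heq]
      have h2 : ((a+b).choose b : ZMod p) * (((a+1) - b : ℕ) : ZMod p) = 0 := by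
        rw [Nat.cast_sub (by omega)]
        push_cast at hidF ⊢
        linear_combination -hidF
      rcases mul_eq_zero.mp h2 with h3 | h3
      · exact hcast b (by omega) h3
      · rw [ZMod.natCast_eq_zero_iff] at h3
        have := Nat.le_of_dvd (by omega) h3
        omega
  -- evaluation of f vanishes on A × B
  have hvanish : ∀ α ∈ A, ∀ β ∈ B,
      ((f.map (Polynomial.evalRingHom α)).eval β) = 0 := by
    intro α hα β hβ
    rw [hfdef, Polynomial.map_mul, Polynomial.eval_mul]
    rcases eq_or_ne α β with rfl | hne
    · have : ((Polynomial.C Polynomial.X - Polynomial.X :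
          Polynomial (Polynomial (ZMod p))).map (Polynomial.evalRingHom α)).eval α = 0 := by
        simp
      rw [this, zero_mul]
    · have hmem : α + β ∈ C' := hCsub (by
        rw [restrictedSumset, Finset.mem_image]
        exact ⟨(α, β), Finset.mem_filter.mpr ⟨Finset.mem_product.mpr ⟨hα, hβ⟩, hne⟩, rfl⟩)
      have : ((g.map (Polynomial.evalRingHom α)).eval β) = 0 := by
        rw [hgdef, Polynomial.map_prod, Polynomial.eval_prod]
        refine Finset.prod_eq_zero hmem ?_
        rw [lin]
        simp
      rw [this, mul_zero]
  -- the reduced polynomial R (x-degrees reduced mod gA)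
  set R : Polynomial (Polynomial (ZMod p)) :=
    ∑ j ∈ Finset.range (f.natDegree + 1),
      Polynomial.C (f.coeff j %ₘ gA) * Polynomial.X ^ j with hRdef
  have hRcoeff : ∀ j, R.coeff j = f.coeff j %ₘ gA := by
    intro j
    rw [hRdef, Polynomial.finset_sum_coeff]
    by_cases hj : j ≤ f.natDegree
    · rw [Finset.sum_eq_single j
        (fun k _ hk => by
          rw [Polynomial.coeff_C_mul, Polynomial.coeff_X_pow, if_neg (Ne.symm hk), mul_zero])
        (fun hnot => absurd (Finset.mem_range.mpr (by omega)) hnot)]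
      rw [Polynomial.coeff_C_mul, Polynomial.coeff_X_pow, if_pos rfl, mul_one]
    · rw [Finset.sum_eq_zero (fun k hk => by
        rw [Finset.mem_range] at hk
        rw [Polynomial.coeff_C_mul, Polynomial.coeff_X_pow, if_neg (by omega), mul_zero])]
      rw [Polynomial.coeff_eq_zero_of_natDegree_lt (by omega), Polynomial.zero_modByMonic]
  -- coefficients of R have small x-degree
  have hRsmall : ∀ j t, a + 2 ≤ t → (R.coeff j).coeff t = 0 := by
    intro j t ht
    rw [hRcoeff]
    apply Polynomial.coeff_eq_zero_of_degree_lt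
    calc (f.coeff j %ₘ gA).degree < gA.degree := Polynomial.degree_modByMonic_lt _ hgA
      _ ≤ t := by
          rw [Polynomial.degree_eq_natDegree hgA.ne_zero, hgAdeg]
          exact_mod_cast ht
  -- R agrees with f after evaluating x at any α ∈ A
  have hRf : ∀ α ∈ A, R.map (Polynomial.evalRingHom α) = f.map (Polynomial.evalRingHom α) := by
    intro α hα
    ext j
    rw [Polynomial.coeff_map, Polynomial.coeff_map, hRcoeff]
    have hmod : f.coeff j %ₘ gA = f.coeff j - gA * (f.coeff j /ₘ gA) :=
      eq_sub_of_add_eq (Polynomial.modByMonic_add_div _ gA)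
    have hgA0 : gA.eval α = 0 := by
      rw [hgAdef, Polynomial.eval_prod]
      exact Finset.prod_eq_zero hα (by simp)
    simp only [Polynomial.coe_evalRingHom, hmod, Polynomial.eval_sub, Polynomial.eval_mul, hgA0,
      zero_mul, sub_zero]
  -- for α ∈ A, gB divides the evaluation of R at x = α
  have hdvd : ∀ α ∈ A, gB ∣ R.map (Polynomial.evalRingHom α) := by
    intro α hα
    rw [hRf α hα, hgBdef]
    exact prod_X_sub_C_dvd_of_eval_zero _ _ (fun β hβ => hvanish α hα β hβ)
  -- the doubly-reduced polynomial is zero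
  set r : Polynomial (Polynomial (ZMod p)) := R %ₘ gB.map Polynomial.C with hrdef
  have hrA : ∀ α ∈ A, r.map (Polynomial.evalRingHom α) = 0 := by
    intro α hα
    rw [hrdef, Polynomial.map_modByMonic _ (hgB.map _)]
    have hmap : (gB.map (Polynomial.C : ZMod p →+* Polynomial (ZMod p))).map
        (Polynomial.evalRingHom α) = gB := by
      rw [Polynomial.map_map]
      have hcomp : (Polynomial.evalRingHom α).comp
          (Polynomial.C : ZMod p →+* Polynomial (ZMod p)) = RingHom.id _ := by
        ext x
        simp
      rw [hcomp, Polynomial.map_id]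
    rw [hmap, Polynomial.modByMonic_eq_zero_iff_dvd hgB]
    exact hdvd α hα
  -- a degree helper
  have hdeglt : ∀ (q : Polynomial (ZMod p)) (D : ℕ), D ≤ a + 1 →
      (∀ t, D < t → q.coeff t = 0) → q.degree < gA.degree := by
    intro q D hD hq
    calc q.degree ≤ (D : WithBot ℕ) := by
          rw [Polynomial.degree_le_iff_coeff_zero]
          intro t ht
          exact hq t (by exact_mod_cast ht)
      _ < gA.degree := by
          rw [Polynomial.degree_eq_natDegree hgA.ne_zero, hgAdeg]
          exact_mod_cast (by omega : D < a + 2)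
  -- the doubly-reduced polynomial is zero
  have hrzero : r = 0 := by
    have hcz : ∀ j, r.coeff j = 0 := by
      intro j
      apply Polynomial.eq_zero_of_natDegree_lt_card_of_eval_eq_zero' _ A
      · intro α hα
        have h2 : (r.map (Polynomial.evalRingHom α)).coeff j = 0 := by rw [hrA α hα]; simp
        rwa [Polynomial.coeff_map] at h2
      · have hle : (r.coeff j).natDegree ≤ a + 1 := by
          rw [Polynomial.natDegree_le_iff_coeff_eq_zero]
          intro t ht
          rw [hrdef, cn_step hgB R t (fun j' _ => hRsmall j' t (by omega)) j]
          exact hRsmall j t (by omega)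
        omega
    exact Polynomial.ext fun j => by rw [hcz j, Polynomial.coeff_zero]
  -- the contradiction: the top coefficient survives the reduction
  have hcond : ∀ j', gB.natDegree ≤ j' → (R.coeff j').coeff (a+1) = 0 := by
    intro j' hj'
    have hj2 : b + 2 ≤ j' := by rw [hgBdeg] at hj'; exact hj'
    rw [hRcoeff, (Polynomial.modByMonic_eq_self_iff hgA).mpr
      (hdeglt _ a (by omega) (fun t ht => hfT j' t (by omega)))]
    exact hfT j' (a+1) (by omega)
  have hfinal : (r.coeff b).coeff (a+1) = (f.coeff b).coeff (a+1) := by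
    rw [hrdef, cn_step hgB R (a+1) hcond b, hRcoeff,
      (Polynomial.modByMonic_eq_self_iff hgA).mpr
        (hdeglt _ (a+1) le_rfl (fun t ht => hfT b t (by omega)))]
  rw [hrzero] at hfinal
  simp only [Polynomial.coeff_zero] at hfinal
  exact hKne hfinal.symm

end keysec

lemma restrictedSumset_comm {α : Type*} [AddCommMonoid α] [DecidableEq α] (A B : Finset α) :
    restrictedSumset A B = restrictedSumset B A := by
  unfold restrictedSumset
  ext z
  simp only [Finset.mem_image, Finset.mem_filter, Finset.mem_product]
  constructor
  · rintro ⟨⟨x, y⟩, ⟨⟨hx, hy⟩, hne⟩, rfl⟩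
    exact ⟨(y, x), ⟨⟨hy, hx⟩, Ne.symm hne⟩, add_comm y x⟩
  · rintro ⟨⟨x, y⟩, ⟨⟨hx, hy⟩, hne⟩, rfl⟩
    exact ⟨(y, x), ⟨⟨hy, hx⟩, Ne.symm hne⟩, add_comm y x⟩

lemma restrictedSumset_mono_right {α : Type*} [AddCommMonoid α] [DecidableEq α]
    {A B B' : Finset α} (h : B' ⊆ B) : restrictedSumset A B' ⊆ restrictedSumset A B :=
  Finset.image_subset_image (Finset.filter_subset_filter _
    (Finset.product_subset_product (Finset.Subset.refl A) h))

lemma restrictedSumset_singleton {α : Type*} [AddCommMonoid α] [DecidableEq α]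
    (A : Finset α) (β : α) :
    restrictedSumset A {β} = (A.erase β).image (· + β) := by
  unfold restrictedSumset
  ext z
  simp only [Finset.mem_image, Finset.mem_filter, Finset.mem_product, Finset.mem_singleton,
    Finset.mem_erase]
  constructor
  · rintro ⟨⟨x, y⟩, ⟨⟨hx, rfl⟩, hne⟩, rfl⟩
    exact ⟨x, ⟨hne, hx⟩, rfl⟩
  · rintro ⟨x, ⟨hne, hx⟩, rfl⟩
    exact ⟨(x, β), ⟨⟨hx, rfl⟩, hne⟩, rfl⟩

section keysec2
variable {p : ℕ} [Fact p.Prime]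

lemma key_lemma2 (A B : Finset (ZMod p)) (hB2 : 2 ≤ B.card) (hBA : B.card ≤ A.card) :
    min p (A.card + B.card - 3) ≤ (restrictedSumset A B).card := by
  have hAp : A.card ≤ p := by
    have h := Finset.card_le_univ A
    rwa [ZMod.card p] at h
  by_cases hle : A.card + B.card - 3 ≤ p
  · exact le_trans (min_le_right _ _) (key_lemma A B hB2 hBA hle)
  · push_neg at hle
    obtain ⟨B', hB'sub, hB'card⟩ := Finset.exists_subset_card_eq
      (show p + 3 - A.card ≤ B.card by omega)
    have h1 : min p (A.card + B.card - 3) ≤ p := min_le_left _ _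
    have h2 : p ≤ (restrictedSumset A B').card := by
      have := key_lemma A B' (by omega) (by omega) (by omega)
      omega
    have h3 : (restrictedSumset A B').card ≤ (restrictedSumset A B).card :=
      Finset.card_le_card (restrictedSumset_mono_right hB'sub)
    omega

end keysec2

theorem erdos_heilbronn (p : ℕ) (hp : p.Prime) (A B : Finset (ZMod p))
    (hA : A.Nonempty) (hB : B.Nonempty) :
    min p (A.card + B.card - 3) ≤ (restrictedSumset A B).card := by
  haveI : Fact p.Prime := ⟨hp⟩
  have hsingle : ∀ S T : Finset (ZMod p), T.card = 1 →
      min p (S.card + T.card - 3) ≤ (restrictedSumset S T).card := by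
    intro S T hT
    obtain ⟨β, rfl⟩ := Finset.card_eq_one.mp hT
    rw [restrictedSumset_singleton, Finset.card_image_of_injective _ (add_left_injective β)]
    have h1 : S.card - 1 ≤ (S.erase β).card := Finset.pred_card_le_card_erase
    have h2 := min_le_right p (S.card + ({β} : Finset (ZMod p)).card - 3)
    simp only [Finset.card_singleton] at h2 ⊢
    omega
  by_cases hB1 : B.card = 1
  · exact hsingle A B hB1
  by_cases hA1 : A.card = 1
  · rw [restrictedSumset_comm A B, Nat.add_comm A.card B.card]
    exact hsingle B A hA1
  have hA2 : 2 ≤ A.card := by have := Finset.card_pos.mpr hA; omega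
  have hB2 : 2 ≤ B.card := by have := Finset.card_pos.mpr hB; omega
  rcases le_total B.card A.card with h | h
  · exact key_lemma2 A B hB2 h
  · rw [restrictedSumset_comm A B, Nat.add_comm A.card B.card]
    exact key_lemma2 B A hA2 h
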